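/- Let K be a field of characteristic ≠ 2 containing an element i with i² = −1, let V be a finite-dimensional vector space over K equipped with a nondegenerate alternating bilinear form B, and let f : V → V be a linear map with f ∘ f = −id that preserves B (i.e., B(f x, f y) = B(x, y) for all x, y). Then V is the direct sum of the eigenspaces V_i = ker(f − i·id) and V_{−i} = ker(f + i·id), each eigenspace is totally isotropic with respect to B, and each eigenspace has dimension equal to (dim V)/2. -/

import Mathlib

/-- Let `K` be a field of characteristic `≠ 2` containing `i` with `i² = −1`, `V` a
finite-dimensional `K`-vector space with a nondegenerate alternating bilinear form `B`, and
`f : V → V` linear with `f ∘ f = −id` preserving `B`.  Then `V` is the direct sum of the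
eigenspaces `ker (f − i·id)` and `ker (f + i·id)`, each eigenspace is totally isotropic for
`B`, and each eigenspace has dimension equal to `(dim V)/2`. -/
theorem symplectic_second_type_involution_eigenspace_decomposition
    (K V : Type) [Field K] (hchar : ringChar K ≠ 2)
    (i : K) (hi : i * i = -1)
    [AddCommGroup V] [Module K V] [FiniteDimensional K V]
    (B : LinearMap.BilinForm K V)
    (halt : ∀ x : V, B x x = 0)
    (hnd : ∀ x : V, (∀ y : V, B x y = 0) → x = 0)
    (f : V →ₗ[K] V) (hf : f ∘ₗ f = -LinearMap.id)
    (hfB : ∀ x y : V, B (f x) (f y) = B x y) :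
    IsCompl (LinearMap.ker (f - i • LinearMap.id)) (LinearMap.ker (f + i • LinearMap.id)) ∧
      (∀ x ∈ LinearMap.ker (f - i • LinearMap.id),
        ∀ y ∈ LinearMap.ker (f - i • LinearMap.id), B x y = 0) ∧
      (∀ x ∈ LinearMap.ker (f + i • LinearMap.id),
        ∀ y ∈ LinearMap.ker (f + i • LinearMap.id), B x y = 0) ∧
      2 * Module.finrank K ↥(LinearMap.ker (f - i • LinearMap.id)) = Module.finrank K V ∧
      2 * Module.finrank K ↥(LinearMap.ker (f + i • LinearMap.id)) = Module.finrank K V := by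
  classical
  set Wp := LinearMap.ker (f - i • LinearMap.id) with hWp
  set Wm := LinearMap.ker (f + i • LinearMap.id) with hWm
  have h2 : (2 : K) ≠ 0 := by
    intro h
    exact hchar (ringChar.eq_iff.mpr (CharP.charP_iff_prime_eq_zero Nat.prime_two |>.mpr (by exact_mod_cast h)) ▸ rfl)
  have hi0 : i ≠ 0 := by
    intro h; rw [h, mul_zero] at hi
    exact one_ne_zero (neg_eq_zero.mp hi.symm)
  have hmemp : ∀ x : V, x ∈ Wp ↔ f x = i • x := by
    intro x
    simp [hWp, LinearMap.mem_ker, sub_eq_zero]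
  have hmemm : ∀ x : V, x ∈ Wm ↔ f x = -(i • x) := by
    intro x
    simp [hWm, LinearMap.mem_ker, add_eq_zero_iff_eq_neg]
  have hff : ∀ x : V, f (f x) = -x := by
    intro x
    have := LinearMap.ext_iff.mp hf x
    simpa using this
  -- cancel 2
  have hhalf : ∀ a : K, ∀ x : V, (2 : K) • x = a • x → x = (2:K)⁻¹ • (a • x) := by
    intro a x h
    rw [← h, ← smul_assoc, smul_eq_mul, inv_mul_cancel₀ h2, one_smul]
  -- isotropy
  have hisop : ∀ x ∈ Wp, ∀ y ∈ Wp, B x y = 0 := by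
    intro x hx y hy
    have h1 : B x y = (i * i) * B x y := by
      conv_lhs => rw [← hfB x y]
      rw [(hmemp x).1 hx, (hmemp y).1 hy]
      simp [mul_assoc]
    rw [hi, neg_one_mul] at h1
    have : (2 : K) * B x y = 0 := by linear_combination h1
    exact (mul_eq_zero.mp this).resolve_left h2
  have hisom : ∀ x ∈ Wm, ∀ y ∈ Wm, B x y = 0 := by
    intro x hx y hy
    have h1 : B x y = (i * i) * B x y := by
      conv_lhs => rw [← hfB x y]
      rw [(hmemm x).1 hx, (hmemm y).1 hy]
      simp [mul_assoc]
    rw [hi, neg_one_mul] at h1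
    have : (2 : K) * B x y = 0 := by linear_combination h1
    exact (mul_eq_zero.mp this).resolve_left h2
  -- decomposition
  have hdecomp : ∀ x : V, ∃ a ∈ Wp, ∃ b ∈ Wm, x = a + b := by
    intro x
    refine ⟨(2:K)⁻¹ • (x - i • f x), ?_, (2:K)⁻¹ • (x + i • f x), ?_, ?_⟩
    · rw [hmemp]
      rw [map_smul, map_sub, map_smul, hff, smul_neg, sub_neg_eq_add]
      match_scalars <;>
        (first
          | linear_combination (2:K)⁻¹ * hi
          | linear_combination -((2:K)⁻¹) * hi
          | ring)
    · rw [hmemm]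
      rw [map_smul, map_add, map_smul, hff]
      match_scalars <;>
        (first
          | linear_combination (2:K)⁻¹ * hi
          | linear_combination -((2:K)⁻¹) * hi
          | ring)
    · match_scalars <;> (field_simp; try ring)
  have hdisj : Disjoint Wp Wm := by
    rw [Submodule.disjoint_def]
    intro x hxp hxm
    have h1 := (hmemp x).1 hxp
    have h2' := (hmemm x).1 hxm
    have hx0 : ((2:K) * i) • x = 0 := by
      linear_combination (norm := module) h2' - h1
    rcases smul_eq_zero.mp hx0 with h | h
    · exact absurd h (mul_ne_zero h2 hi0)
    · exact h
  have hcodisj : Codisjoint Wp Wm := by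
    rw [codisjoint_iff, eq_top_iff]
    intro x _
    obtain ⟨a, ha, b, hb, rfl⟩ := hdecomp x
    exact Submodule.add_mem_sup ha hb
  have hcompl : IsCompl Wp Wm := ⟨hdisj, hcodisj⟩
  -- dimensions
  have hle : ∀ (U W : Submodule K V), IsCompl U W →
      (∀ x ∈ U, ∀ y ∈ U, B x y = 0) →
      Module.finrank K U ≤ Module.finrank K W := by
    intro U W hUW hiso
    have hinj : Function.Injective (B.domRestrict₁₂ U W) := by
      rw [← LinearMap.ker_eq_bot, LinearMap.ker_eq_bot']
      intro ⟨x, hx⟩ hBx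
      have hxz : ∀ y : V, B x y = 0 := by
        intro y
        obtain ⟨yU, hyU, yW, hyW, rfl⟩ : ∃ a ∈ U, ∃ b ∈ W, y = a + b := by
          have : y ∈ U ⊔ W := by rw [codisjoint_iff.mp hUW.codisjoint]; trivial
          obtain ⟨a, ha, b, hb, h⟩ := Submodule.mem_sup.mp this
          exact ⟨a, ha, b, hb, h.symm⟩
        rw [map_add, hiso x hx yU hyU, zero_add]
        have := LinearMap.ext_iff.mp hBx ⟨yW, hyW⟩
        simpa [LinearMap.domRestrict₁₂_apply] using this
      simpa using hnd x hxz
    calc Module.finrank K U ≤ Module.finrank K (Module.Dual K W) :=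
          LinearMap.finrank_le_finrank_of_injective hinj
      _ = Module.finrank K W := Subspace.dual_finrank_eq
  have hsum : Module.finrank K Wp + Module.finrank K Wm = Module.finrank K V :=
    Submodule.finrank_add_eq_of_isCompl hcompl
  have h1 := hle Wp Wm hcompl hisop
  have h2' := hle Wm Wp hcompl.symm hisom
  have heq : Module.finrank K Wp = Module.finrank K Wm := le_antisymm h1 h2'
  refine ⟨hcompl, hisop, hisom, ?_, ?_⟩ <;> omega
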